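/- Let T be an Ax-maximal consistent set of PTEL formulas such that for every formula α, ●(α ∧ ¬α) ∉ T. Then the set T^{−●} = {α : ●α ∈ T} is Ax-maximal consistent, and moreover T = (T^{−●})^{−◯}, where S^{−◯} = {α : ◯α ∈ S}. -/
import Mathlib


namespace PTEL

/-- Formulas of the probabilistic temporal epistemic logic PTEL with `m` agents
(agents are `Fin m`).  Propositional letters are `atom n` (`n : ℕ`) together with
the special letters `act a` (the letter `A_a`, "agent `a` is active"). -/
inductive Frm (m : ℕ) : Type where
  | atom   : ℕ → Frm m
  | act    : Fin m → Frm m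
  | neg    : Frm m → Frm m
  | and    : Frm m → Frm m → Frm m
  | next   : Frm m → Frm m
  | until  : Frm m → Frm m → Frm m
  | prev   : Frm m → Frm m
  | since  : Frm m → Frm m → Frm m
  | know   : Fin m → Frm m → Frm m
  | common : Frm m → Frm m
  | pge    : ℚ → Frm m → Frm m            -- P_{≥ s} α
  | page   : Fin m → ℚ → Frm m → Frm m    -- P_{a, ≥ s} α

namespace Frm

variable {m : ℕ}

/-- `α → β` defined classically as `¬(α ∧ ¬β)`. -/
def imp (α β : Frm m) : Frm m := Frm.neg (Frm.and α (Frm.neg β))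

/-- `α ∨ β` defined classically. -/
def orf (α β : Frm m) : Frm m := Frm.neg (Frm.and (Frm.neg α) (Frm.neg β))

/-- `α ↔ β`. -/
def ifff (α β : Frm m) : Frm m := Frm.and (imp α β) (imp β α)

/-- A fixed tautology `⊤`. -/
def verum : Frm m := imp (Frm.atom 0) (Frm.atom 0)

/-- `◯^n α`. -/
def nextPow : ℕ → Frm m → Frm m
  | 0, α => α
  | n + 1, α => Frm.next (nextPow n α)

/-- `●^n α`. -/
def prevPow : ℕ → Frm m → Frm m
  | 0, α => α
  | n + 1, α => Frm.prev (prevPow n α)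

/-- `⋀_{l=0}^{n-1} f l` (the empty conjunction is `⊤`). -/
def conjBelow (f : ℕ → Frm m) : ℕ → Frm m
  | 0 => verum
  | n + 1 => Frm.and (conjBelow f n) (f n)

/-- `G α = ⋀_{a ∈ Agents} K_a α` (everybody knows). -/
def ek (α : Frm m) : Frm m :=
  (List.finRange m).foldr (fun a acc => Frm.and (Frm.know a α) acc) verum

/-- `G^n α` where `G^0 α = α` and `G^{n+1} α = G (G^n α)`. -/
def ekPow : ℕ → Frm m → Frm m
  | 0, α => α
  | n + 1, α => ek (ekPow n α)

/-- `◇ α = (α → α) U α`. -/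
def sometime (α : Frm m) : Frm m := Frm.until (imp α α) α

/-- `□ α = ¬ ◇ ¬ α`. -/
def always (α : Frm m) : Frm m := Frm.neg (sometime (Frm.neg α))

/-- `P_{< s} α  =  ¬ P_{≥ s} α`. -/
def plt (s : ℚ) (α : Frm m) : Frm m := Frm.neg (Frm.pge s α)

/-- `P_{≤ s} α  =  P_{≥ 1-s} ¬α`. -/
def ple (s : ℚ) (α : Frm m) : Frm m := Frm.pge (1 - s) (Frm.neg α)

/-- `P_{a, < s} α  =  ¬ P_{a, ≥ s} α`. -/
def palt (a : Fin m) (s : ℚ) (α : Frm m) : Frm m := Frm.neg (Frm.page a s α)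

/-- `P_{a, ≤ s} α  =  P_{a, ≥ 1-s} ¬α`. -/
def pale (a : Fin m) (s : ℚ) (α : Frm m) : Frm m := Frm.page a (1 - s) (Frm.neg α)

end Frm

/-- The unary operators `K_a`, `◯`, `●` used in `k`-nested implications. -/
inductive Op (m : ℕ) : Type where
  | know : Fin m → Op m
  | next : Op m
  | prev : Op m

def Op.app {m : ℕ} : Op m → Frm m → Frm m
  | .know a, α => Frm.know a α
  | .next, α => Frm.next α
  | .prev, α => Frm.prev α

/-- The `k`-nested implication `Φ_{k,B,X}(τ)`.  Here `β0` is the innermost formula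
`β_0`, and `L = [(β_k, X_k), (β_{k-1}, X_{k-1}), …, (β_1, X_1)]` lists the remaining
formulas of `B` paired with the operators of `X`, from the outermost inwards:
`Φ_{0,(β_0),()}(τ) = β_0 → τ` and
`Φ_{k,B,X}(τ) = β_k → X_k Φ_{k-1,(β_0,…,β_{k-1}),(X_1,…,X_{k-1})}(τ)` for `k ≥ 1`. -/
def KNI {m : ℕ} (β0 : Frm m) : List (Frm m × Op m) → Frm m → Frm m
  | [], τ => Frm.imp β0 τ
  | p :: L, τ => Frm.imp p.1 (Op.app p.2 (KNI β0 L τ))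

/-- Instances of classical propositional tautologies: formulas true under every
Boolean valuation that respects `¬` and `∧`. -/
def IsTautology {m : ℕ} (φ : Frm m) : Prop :=
  ∀ v : Frm m → Bool,
    (∀ α, v (Frm.neg α) = !(v α)) →
    (∀ α β, v (Frm.and α β) = (v α && v β)) →
    v φ = true

/-- `q ∈ [0,1] ∩ ℚ`. -/
def InUnit (q : ℚ) : Prop := 0 ≤ q ∧ q ≤ 1

/-- Derivability in the axiomatic system `Ax` of PTEL.  Premises of the
necessitation rules must be theorems (derivable from `∅`); the rules
`ruleUntil`, `ruleSince`, `ruleCommon`, `ruleArch`, `ruleArchA` are the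
infinitary rules RU, RS, RC, RGA, RA formulated via `k`-nested implications. -/
inductive Deriv {m : ℕ} : Set (Frm m) → Frm m → Prop where
  -- I. propositional part
  | hyp {T : Set (Frm m)} {φ} (h : φ ∈ T) : Deriv T φ
  | tauto {T : Set (Frm m)} {φ} (h : IsTautology φ) : Deriv T φ
  | mp {T : Set (Frm m)} {φ ψ} (h1 : Deriv T (Frm.imp φ ψ)) (h2 : Deriv T φ) : Deriv T ψ
  -- II. temporal axioms and rules
  | axNextNeg {T : Set (Frm m)} (α) :
      Deriv T (Frm.ifff (Frm.neg (Frm.next α)) (Frm.next (Frm.neg α)))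
  | axNextImp {T : Set (Frm m)} (α β) :
      Deriv T (Frm.imp (Frm.next (Frm.imp α β)) (Frm.imp (Frm.next α) (Frm.next β)))
  | axUntilNext {T : Set (Frm m)} (α β) :
      Deriv T (Frm.ifff (Frm.until α β)
        (Frm.orf β (Frm.and α (Frm.next (Frm.until α β)))))
  | axUntilSometime {T : Set (Frm m)} (α β) :
      Deriv T (Frm.imp (Frm.until α β) (Frm.sometime β))
  | axPrevNeg {T : Set (Frm m)} (α) :
      Deriv T (Frm.imp (Frm.neg (Frm.prev (Frm.neg α))) (Frm.prev α))
  | axPrevImp {T : Set (Frm m)} (α β) :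
      Deriv T (Frm.imp (Frm.prev (Frm.imp α β)) (Frm.imp (Frm.prev α) (Frm.prev β)))
  | axPrevAnd {T : Set (Frm m)} (α β) :
      Deriv T (Frm.imp (Frm.and (Frm.prev α) (Frm.prev β)) (Frm.prev (Frm.and α β)))
  | axNextPrev {T : Set (Frm m)} (α) :
      Deriv T (Frm.ifff (Frm.next (Frm.prev α)) α)
  | axNextPrevC1 {T : Set (Frm m)} (α) :
      Deriv T (Frm.imp (Frm.next (Frm.prev α)) (Frm.prev (Frm.next α)))
  | axNextPrevC2 {T : Set (Frm m)} (α γ) :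
      Deriv T (Frm.imp (Frm.neg (Frm.prev (Frm.and γ (Frm.neg γ))))
        (Frm.ifff (Frm.next (Frm.prev α)) (Frm.prev (Frm.next α))))
  | axSincePrev {T : Set (Frm m)} (α β) :
      Deriv T (Frm.ifff (Frm.since α β)
        (Frm.orf β (Frm.and (Frm.neg (Frm.prev (Frm.and α (Frm.neg α))))
          (Frm.and α (Frm.prev (Frm.since α β))))))
  | axOncePrev {T : Set (Frm m)} (β) :
      Deriv T (Frm.since (Frm.imp (Frm.prev β) (Frm.prev β)) (Frm.prev β))
  | ruleNextNec {T : Set (Frm m)} {α} (h : Deriv ∅ α) : Deriv T (Frm.next α)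
  | rulePrevNec {T : Set (Frm m)} {α} (h : Deriv ∅ α) : Deriv T (Frm.prev α)
  | ruleUntil {T : Set (Frm m)} {β0 : Frm m} {L : List (Frm m × Op m)} {α β : Frm m}
      (h : ∀ i : ℕ, Deriv T (KNI β0 L (Frm.neg
        (Frm.and (Frm.conjBelow (fun l => Frm.nextPow l α) i) (Frm.nextPow i β))))) :
      Deriv T (KNI β0 L (Frm.neg (Frm.until α β)))
  | ruleSince {T : Set (Frm m)} {β0 : Frm m} {L : List (Frm m × Op m)} {α β : Frm m}
      (h : ∀ i : ℕ, Deriv T (KNI β0 L (Frm.neg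
        (Frm.and (Frm.conjBelow (fun l => Frm.prevPow l α) i)
          (Frm.and (Frm.conjBelow (fun l => Frm.neg (Frm.prevPow l (Frm.and α (Frm.neg α)))) (i + 1))
            (Frm.prevPow i β)))))) :
      Deriv T (KNI β0 L (Frm.neg (Frm.since α β)))
  -- III. epistemic axioms and rules
  | axKImp {T : Set (Frm m)} (a : Fin m) (α β) :
      Deriv T (Frm.imp (Frm.know a (Frm.imp α β)) (Frm.imp (Frm.know a α) (Frm.know a β)))
  | axKRefl {T : Set (Frm m)} (a : Fin m) (α) :
      Deriv T (Frm.imp (Frm.act a) (Frm.imp (Frm.know a α) α))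
  | axKAware {T : Set (Frm m)} (a : Fin m) :
      Deriv T (Frm.imp (Frm.act a) (Frm.know a (Frm.act a)))
  | axKDead {T : Set (Frm m)} (a : Fin m) (α) :
      Deriv T (Frm.imp (Frm.neg (Frm.act a)) (Frm.know a (Frm.and α (Frm.neg α))))
  | axKSymm {T : Set (Frm m)} (a : Fin m) (α) :
      Deriv T (Frm.imp (Frm.know a (Frm.neg α)) (Frm.know a (Frm.neg (Frm.know a α))))
  | axKTrans {T : Set (Frm m)} (a : Fin m) (α) :
      Deriv T (Frm.imp (Frm.know a α) (Frm.know a (Frm.know a α)))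
  | axCommon {T : Set (Frm m)} (α) (n : ℕ) :
      Deriv T (Frm.imp (Frm.common α) (Frm.ekPow n α))
  | ruleKNec {T : Set (Frm m)} (a : Fin m) {α} (h : Deriv ∅ α) : Deriv T (Frm.know a α)
  | ruleCommon {T : Set (Frm m)} {β0 : Frm m} {L : List (Frm m × Op m)} {α : Frm m}
      (h : ∀ i : ℕ, Deriv T (KNI β0 L (Frm.ekPow i α))) :
      Deriv T (KNI β0 L (Frm.common α))
  -- IV. probabilities on runs
  | axPge0 {T : Set (Frm m)} (α) : Deriv T (Frm.pge 0 α)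
  | axPleLt {T : Set (Frm m)} (α) {r t : ℚ} (hr : InUnit r) (ht : InUnit t) (h : r < t) :
      Deriv T (Frm.imp (Frm.ple r α) (Frm.plt t α))
  | axPltLe {T : Set (Frm m)} (α) {t : ℚ} (ht : InUnit t) :
      Deriv T (Frm.imp (Frm.plt t α) (Frm.ple t α))
  | axPAdd {T : Set (Frm m)} (α β) {r t : ℚ} (hr : InUnit r) (ht : InUnit t) :
      Deriv T (Frm.imp
        (Frm.and (Frm.pge r α) (Frm.and (Frm.pge t β) (Frm.pge 1 (Frm.neg (Frm.and α β)))))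
        (Frm.pge (min 1 (r + t)) (Frm.orf α β)))
  | axPAdd2 {T : Set (Frm m)} (α β) {r t : ℚ} (hr : InUnit r) (ht : InUnit t)
      (h : r + t ≤ 1) :
      Deriv T (Frm.imp (Frm.and (Frm.ple r α) (Frm.plt t α)) (Frm.plt (r + t) (Frm.orf α β)))
  | axPPrev {T : Set (Frm m)} (α) :
      Deriv T (Frm.pge 1 (Frm.prev (Frm.and α (Frm.neg α))))
  | rulePNec {T : Set (Frm m)} {α} (h : Deriv ∅ α) : Deriv T (Frm.pge 1 α)
  | ruleArch {T : Set (Frm m)} {β0 : Frm m} {L : List (Frm m × Op m)} {α : Frm m} {r : ℚ}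
      (hr0 : 0 < r) (hr1 : r ≤ 1)
      (h : ∀ i : ℕ, 1 / r ≤ (i : ℚ) → Deriv T (KNI β0 L (Frm.pge (r - 1 / (i : ℚ)) α))) :
      Deriv T (KNI β0 L (Frm.pge r α))
  -- V. probabilities on possible worlds
  | axPAge0 {T : Set (Frm m)} (a : Fin m) (α) : Deriv T (Frm.page a 0 α)
  | axPALeLt {T : Set (Frm m)} (a : Fin m) (α) {r t : ℚ} (hr : InUnit r) (ht : InUnit t)
      (h : r < t) :
      Deriv T (Frm.imp (Frm.pale a r α) (Frm.palt a t α))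
  | axPALtLe {T : Set (Frm m)} (a : Fin m) (α) {t : ℚ} (ht : InUnit t) :
      Deriv T (Frm.imp (Frm.palt a t α) (Frm.pale a t α))
  | axPAAdd {T : Set (Frm m)} (a : Fin m) (α β) {r t : ℚ} (hr : InUnit r) (ht : InUnit t) :
      Deriv T (Frm.imp
        (Frm.and (Frm.page a r α)
          (Frm.and (Frm.page a t β) (Frm.page a 1 (Frm.neg (Frm.and α β)))))
        (Frm.page a (min 1 (r + t)) (Frm.orf α β)))
  | axPAAdd2 {T : Set (Frm m)} (a : Fin m) (α β) {r t : ℚ} (hr : InUnit r) (ht : InUnit t)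
      (h : r + t ≤ 1) :
      Deriv T (Frm.imp (Frm.and (Frm.pale a r α) (Frm.palt a t α))
        (Frm.palt a (r + t) (Frm.orf α β)))
  | rulePANec {T : Set (Frm m)} (a : Fin m) {α} (h : Deriv ∅ α) : Deriv T (Frm.page a 1 α)
  | ruleArchA {T : Set (Frm m)} (a : Fin m) {β0 : Frm m} {L : List (Frm m × Op m)}
      {α : Frm m} {r : ℚ} (hr0 : 0 < r) (hr1 : r ≤ 1)
      (h : ∀ i : ℕ, 1 / r ≤ (i : ℚ) →
        Deriv T (KNI β0 L (Frm.page a (r - 1 / (i : ℚ)) α))) :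
      Deriv T (KNI β0 L (Frm.page a r α))

/-- A theory is inconsistent if it derives every formula. -/
def Inconsistent {m : ℕ} (T : Set (Frm m)) : Prop := ∀ φ : Frm m, Deriv T φ

def Consistent {m : ℕ} (T : Set (Frm m)) : Prop := ¬ Inconsistent T

def MaximalConsistent {m : ℕ} (T : Set (Frm m)) : Prop :=
  Consistent T ∧ ∀ S : Set (Frm m), T ⊂ S → ¬ Consistent S

/-! ### Semantics -/

/-- A run assigns to each moment the set of propositional letters true at it
(`Sum.inl n` is the letter `atom n`, `Sum.inr a` is the letter `A_a`). -/
abbrev Run (m : ℕ) : Type := ℕ → Set (ℕ ⊕ Fin m)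

/-- A finitely additive probability measure defined on an algebra of subsets of `X`. -/
structure FinAddProb (X : Type) where
  sets : Set (Set X)
  univ_mem : Set.univ ∈ sets
  compl_mem : ∀ A ∈ sets, Aᶜ ∈ sets
  union_mem : ∀ A ∈ sets, ∀ B ∈ sets, A ∪ B ∈ sets
  mu : Set X → ℝ
  mu_nonneg : ∀ A ∈ sets, 0 ≤ mu A
  mu_univ : mu Set.univ = 1
  mu_add : ∀ A ∈ sets, ∀ B ∈ sets, Disjoint A B → mu (A ∪ B) = mu A + mu B

/-- A finitely additive probability space on a nonempty subset (`carrier`) of `X`,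
with an algebra of subsets of the carrier. -/
structure SubFinAddProb (X : Type) where
  carrier : Set X
  carrier_nonempty : carrier.Nonempty
  sets : Set (Set X)
  sets_sub : ∀ A ∈ sets, A ⊆ carrier
  carrier_mem : carrier ∈ sets
  compl_mem : ∀ A ∈ sets, carrier \ A ∈ sets
  union_mem : ∀ A ∈ sets, ∀ B ∈ sets, A ∪ B ∈ sets
  mu : Set X → ℝ
  mu_nonneg : ∀ A ∈ sets, 0 ≤ mu A
  mu_carrier : mu carrier = 1
  mu_add : ∀ A ∈ sets, ∀ B ∈ sets, Disjoint A B → mu (A ∪ B) = mu A + mu B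

/-- A PTEL Kripke model. -/
structure Model (m : ℕ) where
  runs : Set (Run m)
  runs_nonempty : runs.Nonempty
  /-- epistemic accessibility relations on possible worlds (pairs run/time) -/
  acc : Fin m → (↥runs × ℕ) → (↥runs × ℕ) → Prop
  acc_symm : ∀ a w w', acc a w w' → acc a w' w
  acc_trans : ∀ a w w' w'', acc a w w' → acc a w' w'' → acc a w w''
  /-- agent `a` is inactive at `w` iff no world is accessible from `w` -/
  inactive_iff : ∀ (a : Fin m) (w : ↥runs × ℕ),
    Sum.inr a ∉ w.1.1 w.2 ↔ ∀ w', ¬ acc a w w'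
  /-- accessibility is reflexive at worlds where the agent is active -/
  acc_refl : ∀ (a : Fin m) (w : ↥runs × ℕ), Sum.inr a ∈ w.1.1 w.2 → acc a w w
  /-- the probability on runs associated to each possible world -/
  runProb : (↥runs × ℕ) → FinAddProb ↥runs
  /-- the agents' probability spaces on possible worlds -/
  agentProb : Fin m → (↥runs × ℕ) → SubFinAddProb (↥runs × ℕ)

abbrev Model.World {m : ℕ} (M : Model m) : Type := ↥M.runs × ℕ

/-- Satisfaction of a formula at a possible world of a model.  Common knowledge is
interpreted via reachability (the equivalent formulation of `(r,n) ⊨ C β`). -/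
def Sat {m : ℕ} (M : Model m) : Frm m → M.World → Prop
  | .atom n, w => Sum.inl n ∈ w.1.1 w.2
  | .act a, w => Sum.inr a ∈ w.1.1 w.2
  | .neg α, w => ¬ Sat M α w
  | .and α β, w => Sat M α w ∧ Sat M β w
  | .next α, w => Sat M α (w.1, w.2 + 1)
  | .until α β, w => ∃ j, w.2 ≤ j ∧ Sat M β (w.1, j) ∧
      ∀ k, w.2 ≤ k → k < j → Sat M α (w.1, k)
  | .prev α, w => w.2 = 0 ∨ ∃ n, w.2 = n + 1 ∧ Sat M α (w.1, n)
  | .since α β, w => ∃ j, j ≤ w.2 ∧ Sat M β (w.1, j) ∧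
      ∀ k, j < k → k ≤ w.2 → Sat M α (w.1, k)
  | .know a α, w => ∀ w', M.acc a w w' → Sat M α w'
  | .common α, w => ∀ w', Relation.ReflTransGen (fun u v => ∃ a, M.acc a u v) w w' →
      Sat M α w'
  | .pge s α, w => (s : ℝ) ≤ (M.runProb w).mu {r : ↥M.runs | Sat M α (r, 0)}
  | .page a s α, w => (s : ℝ) ≤ (M.agentProb a w).mu
      {w' : M.World | w' ∈ (M.agentProb a w).carrier ∧ Sat M α w'}

/-- A model is measurable if all definable sets of runs / of possible worlds are
measurable. -/
def Model.Measurable {m : ℕ} (M : Model m) : Prop :=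
  ∀ (β : Frm m) (w : M.World),
    {r : ↥M.runs | Sat M β (r, 0)} ∈ (M.runProb w).sets ∧
    ∀ a : Fin m,
      {w' : M.World | w' ∈ (M.agentProb a w).carrier ∧ Sat M β w'} ∈ (M.agentProb a w).sets

/-- A set of formulas is satisfiable if it holds at a possible world of some
measurable model. -/
def SatisfiableSet {m : ℕ} (T : Set (Frm m)) : Prop :=
  ∃ M : Model m, M.Measurable ∧ ∃ w : M.World, ∀ φ ∈ T, Sat M φ w

end PTEL

namespace PTEL

section Aux
variable {m : ℕ}

/-! Tautology instances -/

lemma taut_refl (a : Frm m) : IsTautology (Frm.imp a a) := by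
  intro v hneg hand
  simp only [Frm.imp, hneg, hand]
  cases v a <;> rfl

lemma taut_verum : IsTautology (Frm.verum : Frm m) := taut_refl _

lemma taut_k (a b : Frm m) : IsTautology (Frm.imp a (Frm.imp b a)) := by
  intro v hneg hand
  simp only [Frm.imp, hneg, hand]
  cases v a <;> cases v b <;> rfl

lemma taut_s (a b c : Frm m) :
    IsTautology (Frm.imp (Frm.imp a (Frm.imp b c))
      (Frm.imp (Frm.imp a b) (Frm.imp a c))) := by
  intro v hneg hand
  simp only [Frm.imp, hneg, hand]
  cases v a <;> cases v b <;> cases v c <;> rfl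

lemma taut_curry (a b c : Frm m) :
    IsTautology (Frm.imp (Frm.imp a (Frm.imp b c)) (Frm.imp (Frm.and a b) c)) := by
  intro v hneg hand
  simp only [Frm.imp, hneg, hand]
  cases v a <;> cases v b <;> cases v c <;> rfl

lemma taut_uncurry (a b c : Frm m) :
    IsTautology (Frm.imp (Frm.imp (Frm.and a b) c) (Frm.imp a (Frm.imp b c))) := by
  intro v hneg hand
  simp only [Frm.imp, hneg, hand]
  cases v a <;> cases v b <;> cases v c <;> rfl

lemma taut_explode (a b : Frm m) :
    IsTautology (Frm.imp a (Frm.imp (Frm.neg a) b)) := by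
  intro v hneg hand
  simp only [Frm.imp, hneg, hand]
  cases v a <;> cases v b <;> rfl

lemma taut_clavius (a : Frm m) :
    IsTautology (Frm.imp (Frm.imp (Frm.neg a) a) a) := by
  intro v hneg hand
  simp only [Frm.imp, hneg, hand]
  cases v a <;> rfl

lemma taut_contra (a b : Frm m) :
    IsTautology (Frm.imp (Frm.imp a b) (Frm.imp (Frm.neg b) (Frm.neg a))) := by
  intro v hneg hand
  simp only [Frm.imp, hneg, hand]
  cases v a <;> cases v b <;> rfl

lemma taut_and_left (a b : Frm m) : IsTautology (Frm.imp (Frm.and a b) a) := by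
  intro v hneg hand
  simp only [Frm.imp, hneg, hand]
  cases v a <;> cases v b <;> rfl

lemma taut_and_right (a b : Frm m) : IsTautology (Frm.imp (Frm.and a b) b) := by
  intro v hneg hand
  simp only [Frm.imp, hneg, hand]
  cases v a <;> cases v b <;> rfl

lemma taut_dne (a : Frm m) : IsTautology (Frm.imp (Frm.neg (Frm.neg a)) a) := by
  intro v hneg hand
  simp only [Frm.imp, hneg, hand]
  cases v a <;> rfl

/-- Weakening an already derived formula under an implication. -/
lemma dK {T : Set (Frm m)} {φ ψ : Frm m} (h : Deriv T ψ) : Deriv T (Frm.imp φ ψ) :=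
  Deriv.mp (Deriv.tauto (taut_k _ _)) h

end Aux

section Aux2
variable {m : ℕ}

/-- Pushing an implication `φ → ·` into a `k`-nested implication: for any family of
"premise" formulas closed under an infinitary rule (uniformly in the nesting data),
`φ → Φ(τ)` is derivable whenever all `φ → Φ(τᵢ)` are. -/
theorem kni_rule_lift {T : Set (Frm m)} {φ β0 : Frm m} {L : List (Frm m × Op m)}
    {ι : Sort*} {τs : ι → Frm m} {τ : Frm m}
    (h : ∀ i, Deriv T (Frm.imp φ (KNI β0 L (τs i))))
    (rule : ∀ (β0' : Frm m) (L' : List (Frm m × Op m)),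
      (∀ i, Deriv T (KNI β0' L' (τs i))) → Deriv T (KNI β0' L' τ)) :
    Deriv T (Frm.imp φ (KNI β0 L τ)) := by
  cases L with
  | nil =>
      have h2 : ∀ i, Deriv T (KNI (Frm.and φ β0) [] (τs i)) := fun i =>
        Deriv.mp (Deriv.tauto (taut_curry φ β0 (τs i))) (h i)
      exact Deriv.mp (Deriv.tauto (taut_uncurry φ β0 τ)) (rule _ _ h2)
  | cons p L' =>
      have h2 : ∀ i, Deriv T (KNI β0 ((Frm.and φ p.1, p.2) :: L') (τs i)) := fun i =>
        Deriv.mp (Deriv.tauto (taut_curry φ p.1 (Op.app p.2 (KNI β0 L' (τs i))))) (h i)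
      exact Deriv.mp (Deriv.tauto (taut_uncurry φ p.1 (Op.app p.2 (KNI β0 L' τ))))
        (rule _ _ h2)

/-- Pushing `●` into a `k`-nested implication, via the list extended by `(⊤, ●)`. -/
theorem kni_prev_lift {T : Set (Frm m)} {β0 : Frm m} {L : List (Frm m × Op m)}
    {ι : Sort*} {τs : ι → Frm m} {τ : Frm m}
    (h : ∀ i, Deriv T (Frm.prev (KNI β0 L (τs i))))
    (rule : ∀ (β0' : Frm m) (L' : List (Frm m × Op m)),
      (∀ i, Deriv T (KNI β0' L' (τs i))) → Deriv T (KNI β0' L' τ)) :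
    Deriv T (Frm.prev (KNI β0 L τ)) := by
  have h2 : ∀ i, Deriv T (KNI β0 ((Frm.verum, Op.prev) :: L) (τs i)) := fun i =>
    dK (h i)
  have h3 := rule β0 ((Frm.verum, Op.prev) :: L) h2
  exact Deriv.mp h3 (Deriv.tauto taut_verum)

end Aux2

section Aux3
variable {m : ℕ}

/-- Cut: if every member of `S` is derivable from `T`, then everything derivable
from `S` is derivable from `T`. -/
theorem Deriv.cut {T : Set (Frm m)} : ∀ {S : Set (Frm m)} {ψ : Frm m}, Deriv S ψ →
    (∀ χ ∈ S, Deriv T χ) → Deriv T ψ := by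
  intro S ψ hd
  induction hd with
  | hyp h => exact fun hs => hs _ h
  | tauto h => exact fun _ => .tauto h
  | mp _ _ ih1 ih2 => exact fun hs => .mp (ih1 hs) (ih2 hs)
  | axNextNeg α => exact fun _ => .axNextNeg α
  | axNextImp α β => exact fun _ => .axNextImp α β
  | axUntilNext α β => exact fun _ => .axUntilNext α β
  | axUntilSometime α β => exact fun _ => .axUntilSometime α β
  | axPrevNeg α => exact fun _ => .axPrevNeg α
  | axPrevImp α β => exact fun _ => .axPrevImp α β
  | axPrevAnd α β => exact fun _ => .axPrevAnd α β
  | axNextPrev α => exact fun _ => .axNextPrev α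
  | axNextPrevC1 α => exact fun _ => .axNextPrevC1 α
  | axNextPrevC2 α γ => exact fun _ => .axNextPrevC2 α γ
  | axSincePrev α β => exact fun _ => .axSincePrev α β
  | axOncePrev β => exact fun _ => .axOncePrev β
  | ruleNextNec h => exact fun _ => .ruleNextNec h
  | rulePrevNec h => exact fun _ => .rulePrevNec h
  | ruleUntil h ih => exact fun hs => .ruleUntil (fun i => ih i hs)
  | ruleSince h ih => exact fun hs => .ruleSince (fun i => ih i hs)
  | axKImp a α β => exact fun _ => .axKImp a α β
  | axKRefl a α => exact fun _ => .axKRefl a α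
  | axKAware a => exact fun _ => .axKAware a
  | axKDead a α => exact fun _ => .axKDead a α
  | axKSymm a α => exact fun _ => .axKSymm a α
  | axKTrans a α => exact fun _ => .axKTrans a α
  | axCommon α n => exact fun _ => .axCommon α n
  | ruleKNec a h => exact fun _ => .ruleKNec a h
  | ruleCommon h ih => exact fun hs => .ruleCommon (fun i => ih i hs)
  | axPge0 α => exact fun _ => .axPge0 α
  | axPleLt α hr ht hlt => exact fun _ => .axPleLt α hr ht hlt
  | axPltLe α ht => exact fun _ => .axPltLe α ht
  | axPAdd α β hr ht => exact fun _ => .axPAdd α β hr ht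
  | axPAdd2 α β hr ht hle => exact fun _ => .axPAdd2 α β hr ht hle
  | axPPrev α => exact fun _ => .axPPrev α
  | rulePNec h => exact fun _ => .rulePNec h
  | ruleArch hr0 hr1 h ih => exact fun hs => .ruleArch hr0 hr1 (fun i hi => ih i hi hs)
  | axPAge0 a α => exact fun _ => .axPAge0 a α
  | axPALeLt a α hr ht hlt => exact fun _ => .axPALeLt a α hr ht hlt
  | axPALtLe a α ht => exact fun _ => .axPALtLe a α ht
  | axPAAdd a α β hr ht => exact fun _ => .axPAAdd a α β hr ht
  | axPAAdd2 a α β hr ht hle => exact fun _ => .axPAAdd2 a α β hr ht hle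
  | rulePANec a h => exact fun _ => .rulePANec a h
  | ruleArchA a hr0 hr1 h ih => exact fun hs => .ruleArchA a hr0 hr1 (fun i hi => ih i hi hs)

end Aux3

section Aux4
variable {m : ℕ}

/-- Deduction theorem (generalized form). -/
theorem Deriv.ded_aux : ∀ {S : Set (Frm m)} {ψ : Frm m}, Deriv S ψ →
    ∀ (T : Set (Frm m)) (φ : Frm m), S ⊆ insert φ T → Deriv T (Frm.imp φ ψ) := by
  intro S ψ hd
  induction hd with
  | hyp h =>
      intro T φ hsub
      rcases Set.mem_insert_iff.mp (hsub h) with rfl | hm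
      · exact Deriv.tauto (taut_refl _)
      · exact dK (.hyp hm)
  | tauto h => exact fun T φ _ => dK (.tauto h)
  | mp _ _ ih1 ih2 =>
      intro T φ hsub
      exact .mp (.mp (.tauto (taut_s _ _ _)) (ih1 T φ hsub)) (ih2 T φ hsub)
  | axNextNeg α => exact fun T φ _ => dK (.axNextNeg α)
  | axNextImp α β => exact fun T φ _ => dK (.axNextImp α β)
  | axUntilNext α β => exact fun T φ _ => dK (.axUntilNext α β)
  | axUntilSometime α β => exact fun T φ _ => dK (.axUntilSometime α β)
  | axPrevNeg α => exact fun T φ _ => dK (.axPrevNeg α)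
  | axPrevImp α β => exact fun T φ _ => dK (.axPrevImp α β)
  | axPrevAnd α β => exact fun T φ _ => dK (.axPrevAnd α β)
  | axNextPrev α => exact fun T φ _ => dK (.axNextPrev α)
  | axNextPrevC1 α => exact fun T φ _ => dK (.axNextPrevC1 α)
  | axNextPrevC2 α γ => exact fun T φ _ => dK (.axNextPrevC2 α γ)
  | axSincePrev α β => exact fun T φ _ => dK (.axSincePrev α β)
  | axOncePrev β => exact fun T φ _ => dK (.axOncePrev β)
  | ruleNextNec h => exact fun T φ _ => dK (.ruleNextNec h)
  | rulePrevNec h => exact fun T φ _ => dK (.rulePrevNec h)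
  | ruleUntil h ih =>
      intro T φ hsub
      exact kni_rule_lift (fun i => ih i T φ hsub) (fun β0' L' hp => .ruleUntil hp)
  | ruleSince h ih =>
      intro T φ hsub
      exact kni_rule_lift (fun i => ih i T φ hsub) (fun β0' L' hp => .ruleSince hp)
  | axKImp a α β => exact fun T φ _ => dK (.axKImp a α β)
  | axKRefl a α => exact fun T φ _ => dK (.axKRefl a α)
  | axKAware a => exact fun T φ _ => dK (.axKAware a)
  | axKDead a α => exact fun T φ _ => dK (.axKDead a α)
  | axKSymm a α => exact fun T φ _ => dK (.axKSymm a α)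
  | axKTrans a α => exact fun T φ _ => dK (.axKTrans a α)
  | axCommon α n => exact fun T φ _ => dK (.axCommon α n)
  | ruleKNec a h => exact fun T φ _ => dK (.ruleKNec a h)
  | ruleCommon h ih =>
      intro T φ hsub
      exact kni_rule_lift (fun i => ih i T φ hsub) (fun β0' L' hp => .ruleCommon hp)
  | axPge0 α => exact fun T φ _ => dK (.axPge0 α)
  | axPleLt α hr ht hlt => exact fun T φ _ => dK (.axPleLt α hr ht hlt)
  | axPltLe α ht => exact fun T φ _ => dK (.axPltLe α ht)
  | axPAdd α β hr ht => exact fun T φ _ => dK (.axPAdd α β hr ht)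
  | axPAdd2 α β hr ht hle => exact fun T φ _ => dK (.axPAdd2 α β hr ht hle)
  | axPPrev α => exact fun T φ _ => dK (.axPPrev α)
  | rulePNec h => exact fun T φ _ => dK (.rulePNec h)
  | @ruleArch S β0 L α r hr0 hr1 h ih =>
      intro T φ hsub
      exact kni_rule_lift
        (fun i : {i : ℕ // 1/r ≤ (i : ℚ)} => ih i.1 i.2 T φ hsub)
        (fun β0' L' hp => .ruleArch hr0 hr1 (fun i hi => hp ⟨i, hi⟩))
  | axPAge0 a α => exact fun T φ _ => dK (.axPAge0 a α)
  | axPALeLt a α hr ht hlt => exact fun T φ _ => dK (.axPALeLt a α hr ht hlt)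
  | axPALtLe a α ht => exact fun T φ _ => dK (.axPALtLe a α ht)
  | axPAAdd a α β hr ht => exact fun T φ _ => dK (.axPAAdd a α β hr ht)
  | axPAAdd2 a α β hr ht hle => exact fun T φ _ => dK (.axPAAdd2 a α β hr ht hle)
  | rulePANec a h => exact fun T φ _ => dK (.rulePANec a h)
  | @ruleArchA S a β0 L α r hr0 hr1 h ih =>
      intro T φ hsub
      exact kni_rule_lift
        (fun i : {i : ℕ // 1/r ≤ (i : ℚ)} => ih i.1 i.2 T φ hsub)
        (fun β0' L' hp => .ruleArchA a hr0 hr1 (fun i hi => hp ⟨i, hi⟩))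

/-- Deduction theorem. -/
theorem Deriv.deduction {T : Set (Frm m)} {φ ψ : Frm m}
    (h : Deriv (insert φ T) ψ) : Deriv T (Frm.imp φ ψ) :=
  Deriv.ded_aux h T φ (subset_refl _)

end Aux4

section Aux5
variable {m : ℕ}

/-- `●`-lifting: derivations from `S` lift to derivations of `●`-formulas from `●S`. -/
theorem Deriv.prevLift : ∀ {S : Set (Frm m)} {ψ : Frm m}, Deriv S ψ →
    Deriv (Frm.prev '' S) (Frm.prev ψ) := by
  intro S ψ hd
  induction hd with
  | hyp h => exact .hyp ⟨_, h, rfl⟩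
  | tauto h => exact .rulePrevNec (.tauto h)
  | mp _ _ ih1 ih2 => exact .mp (.mp (.axPrevImp _ _) ih1) ih2
  | axNextNeg α => exact .rulePrevNec (.axNextNeg α)
  | axNextImp α β => exact .rulePrevNec (.axNextImp α β)
  | axUntilNext α β => exact .rulePrevNec (.axUntilNext α β)
  | axUntilSometime α β => exact .rulePrevNec (.axUntilSometime α β)
  | axPrevNeg α => exact .rulePrevNec (.axPrevNeg α)
  | axPrevImp α β => exact .rulePrevNec (.axPrevImp α β)
  | axPrevAnd α β => exact .rulePrevNec (.axPrevAnd α β)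
  | axNextPrev α => exact .rulePrevNec (.axNextPrev α)
  | axNextPrevC1 α => exact .rulePrevNec (.axNextPrevC1 α)
  | axNextPrevC2 α γ => exact .rulePrevNec (.axNextPrevC2 α γ)
  | axSincePrev α β => exact .rulePrevNec (.axSincePrev α β)
  | axOncePrev β => exact .rulePrevNec (.axOncePrev β)
  | ruleNextNec h => exact .rulePrevNec (.ruleNextNec h)
  | rulePrevNec h => exact .rulePrevNec (.rulePrevNec h)
  | ruleUntil h ih => exact kni_prev_lift (fun i => ih i) (fun β0' L' hp => .ruleUntil hp)
  | ruleSince h ih => exact kni_prev_lift (fun i => ih i) (fun β0' L' hp => .ruleSince hp)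
  | axKImp a α β => exact .rulePrevNec (.axKImp a α β)
  | axKRefl a α => exact .rulePrevNec (.axKRefl a α)
  | axKAware a => exact .rulePrevNec (.axKAware a)
  | axKDead a α => exact .rulePrevNec (.axKDead a α)
  | axKSymm a α => exact .rulePrevNec (.axKSymm a α)
  | axKTrans a α => exact .rulePrevNec (.axKTrans a α)
  | axCommon α n => exact .rulePrevNec (.axCommon α n)
  | ruleKNec a h => exact .rulePrevNec (.ruleKNec a h)
  | ruleCommon h ih => exact kni_prev_lift (fun i => ih i) (fun β0' L' hp => .ruleCommon hp)
  | axPge0 α => exact .rulePrevNec (.axPge0 α)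
  | axPleLt α hr ht hlt => exact .rulePrevNec (.axPleLt α hr ht hlt)
  | axPltLe α ht => exact .rulePrevNec (.axPltLe α ht)
  | axPAdd α β hr ht => exact .rulePrevNec (.axPAdd α β hr ht)
  | axPAdd2 α β hr ht hle => exact .rulePrevNec (.axPAdd2 α β hr ht hle)
  | axPPrev α => exact .rulePrevNec (.axPPrev α)
  | rulePNec h => exact .rulePrevNec (.rulePNec h)
  | @ruleArch S β0 L α r hr0 hr1 h ih =>
      exact kni_prev_lift
        (fun i : {i : ℕ // 1/r ≤ (i : ℚ)} => ih i.1 i.2)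
        (fun β0' L' hp => .ruleArch hr0 hr1 (fun i hi => hp ⟨i, hi⟩))
  | axPAge0 a α => exact .rulePrevNec (.axPAge0 a α)
  | axPALeLt a α hr ht hlt => exact .rulePrevNec (.axPALeLt a α hr ht hlt)
  | axPALtLe a α ht => exact .rulePrevNec (.axPALtLe a α ht)
  | axPAAdd a α β hr ht => exact .rulePrevNec (.axPAAdd a α β hr ht)
  | axPAAdd2 a α β hr ht hle => exact .rulePrevNec (.axPAAdd2 a α β hr ht hle)
  | rulePANec a h => exact .rulePrevNec (.rulePANec a h)
  | @ruleArchA S a β0 L α r hr0 hr1 h ih =>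
      exact kni_prev_lift
        (fun i : {i : ℕ // 1/r ≤ (i : ℚ)} => ih i.1 i.2)
        (fun β0' L' hp => .ruleArchA a hr0 hr1 (fun i hi => hp ⟨i, hi⟩))

end Aux5

section Aux6
variable {m : ℕ}

lemma inconsistent_insert {T : Set (Frm m)} (hT : MaximalConsistent T) {φ : Frm m}
    (h : φ ∉ T) : Inconsistent (insert φ T) :=
  not_not.mp (hT.2 (insert φ T) (Set.ssubset_insert h))

lemma mem_of_deriv {T : Set (Frm m)} (hT : MaximalConsistent T) {φ : Frm m}
    (h : Deriv T φ) : φ ∈ T := by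
  by_contra hφ
  apply hT.1
  intro ψ
  exact Deriv.cut (inconsistent_insert hT hφ ψ)
    (fun χ hχ => (Set.mem_insert_iff.mp hχ).elim (fun e => e ▸ h) Deriv.hyp)

lemma negmem {T : Set (Frm m)} (hT : MaximalConsistent T) {φ : Frm m}
    (h : φ ∉ T) : Frm.neg φ ∈ T := by
  by_contra hn
  have h1 : Deriv (insert (Frm.neg φ) T) φ := inconsistent_insert hT hn φ
  have h2 : Deriv T (Frm.imp (Frm.neg φ) φ) := Deriv.deduction h1
  exact h (mem_of_deriv hT (Deriv.mp (Deriv.tauto (taut_clavius φ)) h2))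

lemma mcs_of_negcomplete {U : Set (Frm m)} (hc : Consistent U)
    (hnc : ∀ φ : Frm m, φ ∉ U → Frm.neg φ ∈ U) : MaximalConsistent U := by
  refine ⟨hc, fun S hUS hcons => ?_⟩
  obtain ⟨φ, hφS, hφU⟩ := (Set.ssubset_iff_of_subset hUS.subset).mp hUS
  exact hcons (fun ψ =>
    Deriv.mp (Deriv.mp (Deriv.tauto (taut_explode φ ψ)) (Deriv.hyp hφS))
      (Deriv.hyp (hUS.subset (hnc φ hφU))))

end Aux6

/-- If `T` is maximal consistent and `●(α ∧ ¬α) ∉ T` for every `α`, then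
`T^{-●} = {α : ●α ∈ T}` is maximal consistent and `T = (T^{-●})^{-◯}`. -/
theorem mcs_unprev {m : ℕ} (T : Set (Frm m)) (hT : MaximalConsistent T)
    (h : ∀ α : Frm m, Frm.prev (Frm.and α (Frm.neg α)) ∉ T) :
    MaximalConsistent {α : Frm m | Frm.prev α ∈ T} ∧
    T = {α : Frm m | Frm.next α ∈ {β : Frm m | Frm.prev β ∈ T}} := by
  set U : Set (Frm m) := {α : Frm m | Frm.prev α ∈ T} with hU
  -- consistency of U
  have hUcons : Consistent U := by
    intro hinc
    have hd : Deriv U (Frm.and (Frm.atom 0) (Frm.neg (Frm.atom 0))) := hinc _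
    have hp := Deriv.prevLift hd
    have hdT : Deriv T (Frm.prev (Frm.and (Frm.atom 0) (Frm.neg (Frm.atom 0)))) := by
      refine Deriv.cut hp ?_
      rintro χ ⟨α, hα, rfl⟩
      exact Deriv.hyp hα
    exact h _ (mem_of_deriv hT hdT)
  -- negation completeness of U
  have hUnc : ∀ φ : Frm m, φ ∉ U → Frm.neg φ ∈ U := by
    intro φ hφ
    have hnp : Frm.neg (Frm.prev φ) ∈ T := negmem hT hφ
    have t2 : Deriv T (Frm.prev (Frm.imp (Frm.neg (Frm.neg φ)) φ)) :=
      Deriv.rulePrevNec (Deriv.tauto (taut_dne φ))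
    have t3 : Deriv T (Frm.imp (Frm.prev (Frm.neg (Frm.neg φ))) (Frm.prev φ)) :=
      Deriv.mp (Deriv.axPrevImp _ _) t2
    have t4 : Deriv T (Frm.neg (Frm.prev (Frm.neg (Frm.neg φ)))) :=
      Deriv.mp (Deriv.mp (Deriv.tauto (taut_contra _ _)) t3) (Deriv.hyp hnp)
    have t5 : Deriv T (Frm.prev (Frm.neg φ)) :=
      Deriv.mp (Deriv.axPrevNeg (Frm.neg φ)) t4
    exact mem_of_deriv hT t5
  refine ⟨mcs_of_negcomplete hUcons hUnc, ?_⟩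
  ext α
  simp only [Set.mem_setOf_eq]
  constructor
  · intro hα
    have e2 : Deriv T (Frm.imp α (Frm.next (Frm.prev α))) :=
      Deriv.mp (Deriv.tauto (taut_and_right _ _)) (Deriv.axNextPrev α)
    have e3 : Deriv T (Frm.next (Frm.prev α)) := Deriv.mp e2 (Deriv.hyp hα)
    exact mem_of_deriv hT (Deriv.mp (Deriv.axNextPrevC1 α) e3)
  · intro hα
    have hγ : Frm.neg (Frm.prev (Frm.and (Frm.atom 0) (Frm.neg (Frm.atom 0)))) ∈ T :=
      negmem hT (h (Frm.atom 0))
    have c2 : Deriv T (Frm.ifff (Frm.next (Frm.prev α)) (Frm.prev (Frm.next α))) :=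
      Deriv.mp (Deriv.axNextPrevC2 α (Frm.atom 0)) (Deriv.hyp hγ)
    have c3 : Deriv T (Frm.imp (Frm.prev (Frm.next α)) (Frm.next (Frm.prev α))) :=
      Deriv.mp (Deriv.tauto (taut_and_right _ _)) c2
    have c4 : Deriv T (Frm.next (Frm.prev α)) := Deriv.mp c3 (Deriv.hyp hα)
    have c5 : Deriv T (Frm.imp (Frm.next (Frm.prev α)) α) :=
      Deriv.mp (Deriv.tauto (taut_and_left _ _)) (Deriv.axNextPrev α)
    exact mem_of_deriv hT (Deriv.mp c5 c4)


end PTEL
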